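/- arXiv:1507.08246 — 2 statements merged into one kernel-verified Lean document; each statement's English description precedes it below -/
import Mathlib

section
/- Let σ ∈ (0,1) and suppose u, v : (0,T] → [0,∞) are differentiable and satisfy, for some constant N > 0: (d/dt)(u/t^{1+σ}) ≤ −((1+σ)/t^{2+σ})(1 − N t^σ) u + (N/t^{1+σ}) v and (d/dt)(v/t^σ) ≤ −(σ/(2 t^{1+σ}))(1 − N t^σ) v + (N/t^{2−σ}) u. Then there exist a = a(σ, N) > 0 and T'' = T''(σ, N) > 0 such that E(t) := a v(t)/t^σ + u(t)/t^{1+σ} satisfies E′(t) ≤ 0 on (0, min{T, T''}]. In particular, if additionally lim_{t→0⁺} E(t) = 0, then u ≡ v ≡ 0 on (0, min{T, T''}]. -/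
open Filter

set_option maxHeartbeats 1000000 in
/-- ODE skeleton of the weighted energy argument: if nonnegative
differentiable `u, v` on `(0,T]` satisfy
`(d/dt)(u/t^{1+σ}) ≤ −((1+σ)/t^{2+σ})(1 − N t^σ) u + (N/t^{1+σ}) v` and
`(d/dt)(v/t^σ) ≤ −(σ/(2t^{1+σ}))(1 − N t^σ) v + (N/t^{2−σ}) u`, then there exist
`a = a(σ,N) > 0` and `T'' = T''(σ,N) > 0` such that
`E(t) = a v(t)/t^σ + u(t)/t^{1+σ}` satisfies `E′ ≤ 0` on `(0, min T T'']`; and if in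
addition `E(t) → 0` as `t → 0⁺`, then `u ≡ v ≡ 0` there. -/
theorem stmt_11 (σ N : ℝ) (hσ : σ ∈ Set.Ioo (0:ℝ) 1) (hN : 0 < N) :
    ∃ a > (0:ℝ), ∃ T'' > (0:ℝ), ∀ (T : ℝ) (_ : 0 < T) (u v : ℝ → ℝ),
      (∀ t ∈ Set.Ioc (0:ℝ) T, 0 ≤ u t ∧ 0 ≤ v t) →
      (∀ t ∈ Set.Ioc (0:ℝ) T, DifferentiableAt ℝ u t ∧ DifferentiableAt ℝ v t) →
      (∀ t ∈ Set.Ioc (0:ℝ) T,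
        deriv (fun s => u s / s ^ (1 + σ)) t ≤
          -((1 + σ) / t ^ (2 + σ)) * (1 - N * t ^ σ) * u t + (N / t ^ (1 + σ)) * v t) →
      (∀ t ∈ Set.Ioc (0:ℝ) T,
        deriv (fun s => v s / s ^ σ) t ≤
          -(σ / (2 * t ^ (1 + σ))) * (1 - N * t ^ σ) * v t + (N / t ^ (2 - σ)) * u t) →
      (∀ t ∈ Set.Ioc (0:ℝ) (min T T''),
          deriv (fun s => a * v s / s ^ σ + u s / s ^ (1 + σ)) t ≤ 0) ∧
      (Tendsto (fun s => a * v s / s ^ σ + u s / s ^ (1 + σ))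
          (nhdsWithin 0 (Set.Ioi 0)) (nhds 0) →
        ∀ t ∈ Set.Ioc (0:ℝ) (min T T''), u t = 0 ∧ v t = 0) := by
  obtain ⟨hσ0, hσ1⟩ := hσ
  set a : ℝ := 4 * N / σ with ha_def
  have ha : 0 < a := by positivity
  set A : ℝ := (1 / (2 * N)) ^ (1 / σ) with hA_def
  set B : ℝ := (1 / (2 * a * N)) ^ (1 / (2 * σ)) with hB_def
  have hA : 0 < A := Real.rpow_pos_of_pos (by positivity) _
  have hB : 0 < B := Real.rpow_pos_of_pos (by positivity) _
  refine ⟨a, ha, min A B, lt_min hA hB, ?_⟩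
  intro T hT u v hpos hdiff hu hv
  set E : ℝ → ℝ := fun s => a * v s / s ^ σ + u s / s ^ (1 + σ) with hE_def
  have hEfun : E = fun s => a * (v s / s ^ σ) + u s / s ^ (1 + σ) := by
    funext s; simp [hE_def, mul_div_assoc]
  -- differentiability of the pieces
  have hdvS : ∀ t ∈ Set.Ioc (0:ℝ) T, DifferentiableAt ℝ (fun s => v s / s ^ σ) t := by
    intro t ht
    exact (hdiff t ht).2.div (Real.differentiableAt_rpow_const_of_ne σ ht.1.ne')
      (Real.rpow_pos_of_pos ht.1 σ).ne'
  have hduP : ∀ t ∈ Set.Ioc (0:ℝ) T, DifferentiableAt ℝ (fun s => u s / s ^ (1 + σ)) t := by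
    intro t ht
    exact (hdiff t ht).1.div (Real.differentiableAt_rpow_const_of_ne (1 + σ) ht.1.ne')
      (Real.rpow_pos_of_pos ht.1 (1 + σ)).ne'
  have hEdiff : ∀ t ∈ Set.Ioc (0:ℝ) T, DifferentiableAt ℝ E t := by
    intro t ht
    rw [hEfun]
    exact ((hdvS t ht).const_mul a).add (hduP t ht)
  have hEderiv : ∀ t ∈ Set.Ioc (0:ℝ) T,
      deriv E t = a * deriv (fun s => v s / s ^ σ) t + deriv (fun s => u s / s ^ (1 + σ)) t := by
    intro t ht
    rw [hEfun, deriv_fun_add ((hdvS t ht).const_mul a) (hduP t ht), deriv_const_mul a (hdvS t ht)]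
  -- key estimate: deriv E ≤ 0 on (0, min T (min A B)]
  have key : ∀ t ∈ Set.Ioc (0:ℝ) (min T (min A B)), deriv E t ≤ 0 := by
    intro t ht
    obtain ⟨ht0, htm⟩ := ht
    have htT : t ∈ Set.Ioc (0:ℝ) T := ⟨ht0, htm.trans (min_le_left _ _)⟩
    have htA : t ≤ A := htm.trans ((min_le_right _ _).trans (min_le_left _ _))
    have htB : t ≤ B := htm.trans ((min_le_right _ _).trans (min_le_right _ _))
    have hP : (0:ℝ) < t ^ (1 + σ) := Real.rpow_pos_of_pos ht0 _
    have hQ : (0:ℝ) < t ^ (2 + σ) := Real.rpow_pos_of_pos ht0 _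
    have hR : (0:ℝ) < t ^ (2 - σ) := Real.rpow_pos_of_pos ht0 _
    have hS : (0:ℝ) < t ^ σ := Real.rpow_pos_of_pos ht0 _
    have hS2 : (0:ℝ) < t ^ (2 * σ) := Real.rpow_pos_of_pos ht0 _
    -- t^σ ≤ 1/(2N)
    have h1 : t ^ σ ≤ 1 / (2 * N) := by
      have := Real.rpow_le_rpow ht0.le htA hσ0.le
      rwa [hA_def, ← Real.rpow_mul (by positivity), one_div_mul_cancel hσ0.ne',
        Real.rpow_one] at this
    -- t^(2σ) ≤ 1/(2aN)
    have h2 : t ^ (2 * σ) ≤ 1 / (2 * a * N) := by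
      have := Real.rpow_le_rpow ht0.le htB (by positivity : (0:ℝ) ≤ 2 * σ)
      rwa [hB_def, ← Real.rpow_mul (by positivity), one_div_mul_cancel (by positivity : (2*σ) ≠ 0),
        Real.rpow_one] at this
    have hNS : N * t ^ σ ≤ 1 / 2 := by
      rw [le_div_iff₀ (by positivity : (0:ℝ) < 2 * N)] at h1
      nlinarith
    have haNS2 : a * N * t ^ (2 * σ) ≤ 1 / 2 := by
      rw [le_div_iff₀ (by positivity : (0:ℝ) < 2 * a * N)] at h2
      nlinarith
    have hrq : t ^ (2 - σ) * t ^ (2 * σ) = t ^ (2 + σ) := by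
      rw [← Real.rpow_add ht0]; congr 1; ring
    have haσ : a * σ = 4 * N := by
      rw [ha_def]; field_simp
    obtain ⟨hu0, hv0⟩ := hpos t htT
    -- coefficient inequalities
    have cv : a * (-(σ / (2 * t ^ (1 + σ))) * (1 - N * t ^ σ)) + N / t ^ (1 + σ) ≤ 0 := by
      have heq : a * (-(σ / (2 * t ^ (1 + σ))) * (1 - N * t ^ σ)) + N / t ^ (1 + σ)
          = (N - a * σ * (1 - N * t ^ σ) / 2) / t ^ (1 + σ) := by
        field_simp; ring
      rw [heq]
      apply div_nonpos_of_nonpos_of_nonneg _ hP.le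
      rw [haσ]
      nlinarith
    have cu : a * (N / t ^ (2 - σ)) + (-((1 + σ) / t ^ (2 + σ)) * (1 - N * t ^ σ)) ≤ 0 := by
      have heq : a * (N / t ^ (2 - σ)) + (-((1 + σ) / t ^ (2 + σ)) * (1 - N * t ^ σ))
          = (a * N * t ^ (2 * σ) - (1 + σ) * (1 - N * t ^ σ)) / t ^ (2 + σ) := by
        rw [← hrq]
        field_simp
        ring
      rw [heq]
      apply div_nonpos_of_nonpos_of_nonneg _ hQ.le
      nlinarith
    have hDu := hu t htT
    have hDv := hv t htT
    rw [hEderiv t htT]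
    have hcomb : a * (-(σ / (2 * t ^ (1 + σ))) * (1 - N * t ^ σ) * v t + N / t ^ (2 - σ) * u t)
        + (-((1 + σ) / t ^ (2 + σ)) * (1 - N * t ^ σ) * u t + N / t ^ (1 + σ) * v t)
        = (a * (-(σ / (2 * t ^ (1 + σ))) * (1 - N * t ^ σ)) + N / t ^ (1 + σ)) * v t
          + (a * (N / t ^ (2 - σ)) + (-((1 + σ) / t ^ (2 + σ)) * (1 - N * t ^ σ))) * u t := by
      ring
    have hv' : (a * (-(σ / (2 * t ^ (1 + σ))) * (1 - N * t ^ σ)) + N / t ^ (1 + σ)) * v t ≤ 0 :=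
      mul_nonpos_of_nonpos_of_nonneg cv hv0
    have hu' : (a * (N / t ^ (2 - σ)) + (-((1 + σ) / t ^ (2 + σ)) * (1 - N * t ^ σ))) * u t ≤ 0 :=
      mul_nonpos_of_nonpos_of_nonneg cu hu0
    have hstep := add_le_add (mul_le_mul_of_nonneg_left hDv ha.le) hDu
    rw [hcomb] at hstep
    linarith [hv', hu']
  refine ⟨key, ?_⟩
  -- vanishing part
  intro htend t ht
  obtain ⟨ht0, htm⟩ := ht
  have htT : t ∈ Set.Ioc (0:ℝ) T := ⟨ht0, htm.trans (min_le_left _ _)⟩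
  have hEnonneg : ∀ s ∈ Set.Ioc (0:ℝ) T, 0 ≤ E s := by
    intro s hs
    obtain ⟨hu0, hv0⟩ := hpos s hs
    have h1 : (0:ℝ) < s ^ σ := Real.rpow_pos_of_pos hs.1 _
    have h2 : (0:ℝ) < s ^ (1 + σ) := Real.rpow_pos_of_pos hs.1 _
    have : 0 ≤ a * v s / s ^ σ := by positivity
    have : 0 ≤ u s / s ^ (1 + σ) := by positivity
    simp only [hE_def]
    positivity
  -- E t ≤ E s for all s ∈ (0, t]
  have hmono : ∀ s ∈ Set.Ioc (0:ℝ) t, E t ≤ E s := by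
    intro s hs
    have hsub : Set.Icc s t ⊆ Set.Ioc (0:ℝ) (min T (min A B)) := by
      intro x hx
      exact ⟨hs.1.trans_le hx.1, hx.2.trans htm⟩
    have hsubT : Set.Icc s t ⊆ Set.Ioc (0:ℝ) T :=
      fun x hx => ⟨(hsub hx).1, (hsub hx).2.trans (min_le_left _ _)⟩
    have hanti : AntitoneOn E (Set.Icc s t) := by
      apply antitoneOn_of_deriv_nonpos (convex_Icc s t)
      · exact fun x hx => (hEdiff x (hsubT hx)).continuousAt.continuousWithinAt
      · intro x hx
        rw [interior_Icc] at hx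
        exact (hEdiff x (hsubT (Set.Ioo_subset_Icc_self hx))).differentiableWithinAt
      · intro x hx
        rw [interior_Icc] at hx
        exact key x (hsub (Set.Ioo_subset_Icc_self hx))
    exact hanti (Set.left_mem_Icc.mpr hs.2) (Set.right_mem_Icc.mpr hs.2) hs.2
  have hEt_le : E t ≤ 0 := by
    refine ge_of_tendsto htend ?_
    filter_upwards [Ioc_mem_nhdsGT_of_mem ⟨le_refl (0:ℝ), ht0⟩] with s hs
    exact hmono s hs
  have hEt : E t = 0 := le_antisymm hEt_le (hEnonneg t htT)
  have h1 : (0:ℝ) < t ^ σ := Real.rpow_pos_of_pos ht0 _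
  have h2 : (0:ℝ) < t ^ (1 + σ) := Real.rpow_pos_of_pos ht0 _
  obtain ⟨hu0, hv0⟩ := hpos t htT
  have hA1 : 0 ≤ a * v t / t ^ σ := by positivity
  have hA2 : 0 ≤ u t / t ^ (1 + σ) := by positivity
  have hsum : a * v t / t ^ σ + u t / t ^ (1 + σ) = 0 := hEt
  have hz1 : a * v t / t ^ σ = 0 := by linarith
  have hz2 : u t / t ^ (1 + σ) = 0 := by linarith
  constructor
  · rcases div_eq_zero_iff.mp hz2 with h | h
    · exact h
    · exact absurd h h2.ne'
  · rcases div_eq_zero_iff.mp hz1 with h | h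
    · exact (mul_eq_zero.mp h).resolve_left ha.ne'
    · exact absurd h h1.ne'
end

section
/- Let σ ∈ (0,1) and let w : (0,T] → [0,∞) be differentiable satisfying w′(t) ≤ −(c/t^{1+σ}) w(t) + C t^{σ−1} for constants c, C > 0, with lim sup_{t→0⁺} w(t) < ∞. Then lim_{t→0⁺} w(t) = 0. -/
open Filter

/-- Singular ODE comparison: if `w ≥ 0` on `(0,T]` satisfies
`w′(t) ≤ −(c/t^{1+σ}) w(t) + C t^{σ−1}` with `c, C > 0` and `w` is bounded near
`0⁺`, then `w(t) → 0` as `t → 0⁺`. -/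
theorem stmt_19 (σ T c C : ℝ) (hσ : σ ∈ Set.Ioo (0:ℝ) 1) (hT : 0 < T)
    (hc : 0 < c) (hC : 0 < C) (w w' : ℝ → ℝ)
    (hw0 : ∀ t ∈ Set.Ioc (0:ℝ) T, 0 ≤ w t)
    (hderiv : ∀ t ∈ Set.Ioc (0:ℝ) T, HasDerivAt w (w' t) t)
    (hineq : ∀ t ∈ Set.Ioc (0:ℝ) T, w' t ≤ -(c / t ^ (1 + σ)) * w t + C * t ^ (σ - 1))
    (hbd : ∃ B : ℝ, ∀ᶠ t in nhdsWithin 0 (Set.Ioi 0), w t ≤ B) :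
    Tendsto w (nhdsWithin 0 (Set.Ioi 0)) (nhds 0) := by
  obtain ⟨hσ0, hσ1⟩ := hσ
  obtain ⟨B, hB⟩ := hbd
  set K : ℝ := C / c with hK
  have hKpos : 0 < K := div_pos hC hc
  set μ : ℝ → ℝ := fun t => Real.exp (-(c/σ) * t ^ (-σ)) with hμ
  have hμpos : ∀ t : ℝ, 0 < μ t := fun t => Real.exp_pos _
  set g : ℝ → ℝ := fun t => μ t * (w t - K * t ^ (2*σ)) with hg
  -- derivative of g
  have hgderiv : ∀ t ∈ Set.Ioc (0:ℝ) T,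
      HasDerivAt g (μ t * ((c * t ^ (-(1+σ))) * (w t - K * t ^ (2*σ))
        + (w' t - K * ((2*σ) * t ^ (2*σ - 1))))) t := by
    intro t ht
    have htpos := ht.1
    have h1 : HasDerivAt (fun x : ℝ => -(c/σ) * x ^ (-σ)) (c * t ^ (-(1+σ))) t := by
      have h := (Real.hasDerivAt_rpow_const (x := t) (p := -σ) (Or.inl htpos.ne')).const_mul
        (-(c/σ))
      refine h.congr_deriv ?_
      rw [show -σ - 1 = -(1+σ) by ring]
      field_simp
    have hμd : HasDerivAt μ (μ t * (c * t ^ (-(1+σ)))) t := by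
      have := h1.exp
      simpa [hμ, mul_comm] using this
    have h2 : HasDerivAt (fun x : ℝ => w x - K * x ^ (2*σ))
        (w' t - K * ((2*σ) * t ^ (2*σ - 1))) t :=
      (hderiv t ht).sub (((Real.hasDerivAt_rpow_const (x := t) (p := 2*σ)
        (Or.inl htpos.ne'))).const_mul K)
    have := hμd.mul h2
    refine this.congr_deriv ?_
    ring
  -- the derivative is nonpositive
  have hgd_nonpos : ∀ t ∈ Set.Ioc (0:ℝ) T,
      μ t * ((c * t ^ (-(1+σ))) * (w t - K * t ^ (2*σ))
        + (w' t - K * ((2*σ) * t ^ (2*σ - 1)))) ≤ 0 := by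
    intro t ht
    have htpos := ht.1
    have hrw : c / t ^ (1+σ) = c * t ^ (-(1+σ)) := by
      rw [Real.rpow_neg htpos.le, div_eq_mul_inv]
    have hmul : t ^ (-(1+σ)) * t ^ (2*σ) = t ^ (σ - 1) := by
      rw [← Real.rpow_add htpos]; ring_nf
    have hw' := hineq t ht
    rw [hrw] at hw'
    have hpow1 : (0:ℝ) ≤ t ^ (2*σ - 1) := Real.rpow_nonneg htpos.le _
    have hpow2 : (0:ℝ) ≤ t ^ (σ - 1) := Real.rpow_nonneg htpos.le _
    have key : (c * t ^ (-(1+σ))) * (w t - K * t ^ (2*σ))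
        + (w' t - K * ((2*σ) * t ^ (2*σ - 1))) ≤ 0 := by
      have hKc : c * K = C := by rw [hK]; field_simp
      have expand : (c * t ^ (-(1+σ))) * (w t - K * t ^ (2*σ))
          + ((-(c * t ^ (-(1+σ))) * w t + C * t ^ (σ - 1)) - K * ((2*σ) * t ^ (2*σ - 1)))
          = (C - c * K) * t ^ (σ - 1) - 2*σ*K * t ^ (2*σ - 1) := by
        have : c * t ^ (-(1+σ)) * (K * t ^ (2*σ)) = c * K * t ^ (σ - 1) := by
          rw [show c * t ^ (-(1+σ)) * (K * t ^ (2*σ)) = c * K * (t ^ (-(1+σ)) * t ^ (2*σ)) by ring,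
            hmul]
        linarith [this]
      have hle : (c * t ^ (-(1+σ))) * (w t - K * t ^ (2*σ))
          + (w' t - K * ((2*σ) * t ^ (2*σ - 1)))
          ≤ (C - c * K) * t ^ (σ - 1) - 2*σ*K * t ^ (2*σ - 1) := by
        rw [← expand]
        have : w' t ≤ -(c * t ^ (-(1+σ))) * w t + C * t ^ (σ - 1) := hw'
        linarith
      have : (C - c * K) * t ^ (σ - 1) - 2*σ*K * t ^ (2*σ - 1) ≤ 0 := by
        rw [hKc]
        have : 0 ≤ 2*σ*K * t ^ (2*σ - 1) := by positivity
        linarith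
      linarith
    exact mul_nonpos_of_nonneg_of_nonpos (hμpos t).le key
  -- g is antitone on any [s, t] ⊆ (0, T]
  have hanti : ∀ s t : ℝ, 0 < s → s ≤ t → t ≤ T → g t ≤ g s := by
    intro s t hs hst htT
    have hsub : Set.Icc s t ⊆ Set.Ioc (0:ℝ) T := fun x hx =>
      ⟨lt_of_lt_of_le hs hx.1, le_trans hx.2 htT⟩
    have h := antitoneOn_of_hasDerivWithinAt_nonpos (convex_Icc s t)
      (f := g) (f' := fun x => μ x * ((c * x ^ (-(1+σ))) * (w x - K * x ^ (2*σ))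
        + (w' x - K * ((2*σ) * x ^ (2*σ - 1)))))
      (fun x hx => ((hgderiv x (hsub hx)).continuousAt).continuousWithinAt)
      (fun x hx => ((hgderiv x (hsub (interior_subset hx))).hasDerivWithinAt))
      (fun x hx => hgd_nonpos x (hsub (interior_subset hx)))
    exact h (Set.left_mem_Icc.2 hst) (Set.right_mem_Icc.2 hst) hst
  -- μ s → 0 as s → 0+
  have hμ0 : Tendsto μ (nhdsWithin 0 (Set.Ioi 0)) (nhds 0) := by
    have h1 : Tendsto (fun s : ℝ => s ^ (-σ)) (nhdsWithin 0 (Set.Ioi 0)) atTop := by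
      have hp : Tendsto (fun s : ℝ => s ^ σ) (nhdsWithin 0 (Set.Ioi 0))
          (nhdsWithin 0 (Set.Ioi 0)) := by
        apply tendsto_nhdsWithin_of_tendsto_nhds_of_eventually_within
        · have hcont : ContinuousAt (fun s : ℝ => s ^ σ) 0 :=
            Real.continuousAt_rpow_const 0 σ (Or.inr hσ0.le)
          have := hcont.continuousWithinAt (s := Set.Ioi 0)
          simpa [Real.zero_rpow hσ0.ne'] using this.tendsto
        · filter_upwards [self_mem_nhdsWithin] with s hs
          exact Real.rpow_pos_of_pos hs σ
      have := tendsto_inv_nhdsGT_zero.comp hp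
      refine this.congr' ?_
      filter_upwards [self_mem_nhdsWithin] with s hs
      simp [Function.comp, Real.rpow_neg (le_of_lt hs)]
    have h2 : Tendsto (fun u : ℝ => Real.exp (-(c/σ) * u)) atTop (nhds 0) := by
      have hcσ : 0 < c / σ := div_pos hc hσ0
      have : Tendsto (fun u : ℝ => -(c/σ) * u) atTop atBot := by
        apply Tendsto.const_mul_atTop_of_neg (by linarith : -(c/σ) < 0) tendsto_id
      exact Real.tendsto_exp_atBot.comp this
    exact h2.comp h1
  -- main bound: w t ≤ K * t ^ (2σ) for small t
  have hmain : ∀ᶠ t in nhdsWithin 0 (Set.Ioi 0), w t ≤ K * t ^ (2*σ) := by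
    have hBmem : ∀ᶠ s in nhdsWithin 0 (Set.Ioi 0), w s ≤ B := hB
    have hTmem : Set.Ioc (0:ℝ) T ∈ nhdsWithin 0 (Set.Ioi 0) :=
      Ioc_mem_nhdsGT_of_mem ⟨le_refl 0, hT⟩
    filter_upwards [hTmem] with t ht
    -- for s ∈ (0, t) small: g t ≤ g s ≤ μ s * B
    have hgle : ∀ᶠ s in nhdsWithin 0 (Set.Ioi 0), g t ≤ μ s * B := by
      have hIoo : Set.Ioo (0:ℝ) t ∈ nhdsWithin 0 (Set.Ioi 0) :=
        Ioo_mem_nhdsGT_of_mem ⟨le_refl 0, ht.1⟩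
      filter_upwards [hIoo, hBmem] with s hs hws
      have h1 : g t ≤ g s := hanti s t hs.1 hs.2.le ht.2
      have h2 : g s ≤ μ s * B := by
        have : w s - K * s ^ (2*σ) ≤ B := by
          have : 0 ≤ K * s ^ (2*σ) := mul_nonneg hKpos.le (Real.rpow_nonneg hs.1.le _)
          linarith
        exact mul_le_mul_of_nonneg_left this (hμpos s).le
      linarith
    have hlim : Tendsto (fun s => μ s * B) (nhdsWithin 0 (Set.Ioi 0)) (nhds (0 * B)) :=
      hμ0.mul_const B
    rw [zero_mul] at hlim
    have hgt0 : g t ≤ 0 := ge_of_tendsto hlim hgle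
    have hgt0' : μ t * (w t - K * t ^ (2*σ)) ≤ 0 := hgt0
    nlinarith [hgt0', hμpos t]
  -- squeeze
  have hlow : ∀ᶠ t in nhdsWithin 0 (Set.Ioi 0), 0 ≤ w t := by
    have hTmem : Set.Ioc (0:ℝ) T ∈ nhdsWithin 0 (Set.Ioi 0) :=
      Ioc_mem_nhdsGT_of_mem ⟨le_refl 0, hT⟩
    filter_upwards [hTmem] with t ht using hw0 t ht
  have hup : Tendsto (fun t : ℝ => K * t ^ (2*σ)) (nhdsWithin 0 (Set.Ioi 0)) (nhds 0) := by
    have hcont : ContinuousAt (fun t : ℝ => t ^ (2*σ)) 0 :=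
      Real.continuousAt_rpow_const 0 (2*σ) (Or.inr (by linarith))
    have : Tendsto (fun t : ℝ => t ^ (2*σ)) (nhdsWithin 0 (Set.Ioi 0)) (nhds 0) := by
      have := hcont.continuousWithinAt (s := Set.Ioi 0)
      simpa [Real.zero_rpow (by positivity : (2*σ) ≠ 0)] using this.tendsto
    simpa using this.const_mul K
  exact tendsto_of_tendsto_of_tendsto_of_le_of_le' tendsto_const_nhds hup hlow hmain
end
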